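/- Let d ≥ 1, g with 1 ≤ g < d, t ≥ 0, δE ≥ 0, and let E_0 ≤ E_1 ≤ ... ≤ E_{d-1} be real numbers with E_0 = E_1 = ... = E_{g-1} (ground energy with degeneracy g). Then the imaginary-time-evolution failure probability P_F(t) = (∑_{i : E_i > E_0 + δE} exp(-2 t E_i)) / (∑_{i=0}^{d-1} exp(-2 t E_i)) satisfies P_F(t) ≤ 1 / (1 + g (d-g)^{-1} exp(2 t δE)). -/
import Mathlib


/-- ITE failure probability upper bound. -/
theorem ite_failure_probability_upper_bound
    (d g : ℕ) (hd : 0 < d) (hg : 1 ≤ g) (hgd : g < d)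
    (t δE : ℝ) (ht : 0 ≤ t) (hδE : 0 ≤ δE)
    (E : Fin d → ℝ) (hmono : Monotone E)
    (hdeg : ∀ i : Fin d, E i = E ⟨0, hd⟩ ↔ (i : ℕ) < g) :
    (∑ i ∈ Finset.univ.filter (fun i : Fin d => E ⟨0, hd⟩ + δE < E i),
        Real.exp (-2 * t * E i)) / (∑ i : Fin d, Real.exp (-2 * t * E i))
      ≤ 1 / (1 + (g : ℝ) * ((d : ℝ) - g)⁻¹ * Real.exp (2 * t * δE)) := by
  set E0 := E ⟨0, hd⟩ with hE0
  set F := Finset.univ.filter (fun i : Fin d => E0 + δE < E i) with hF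
  set G := Finset.univ.filter (fun i : Fin d => (i : ℕ) < g) with hG
  have hdg : (0:ℝ) < (d:ℝ) - g := by
    have : (g:ℝ) < d := by exact_mod_cast hgd
    linarith
  have hGcard : G.card = g := by
    have hGe : G = Finset.Iio (⟨g, hgd⟩ : Fin d) := by
      ext i; simp [hG, Fin.lt_def]
    rw [hGe, Fin.card_Iio]
  have hdisj : Disjoint F G := by
    rw [Finset.disjoint_left]
    intro i hiF hiG
    simp only [hF, Finset.mem_filter] at hiF
    simp only [hG, Finset.mem_filter] at hiG
    have := (hdeg i).2 hiG.2
    linarith [hiF.2]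
  set S := ∑ i ∈ F, Real.exp (-2 * t * E i) with hS
  set N := ∑ i : Fin d, Real.exp (-2 * t * E i) with hN
  set c := (g : ℝ) * Real.exp (-2 * t * E0) with hc
  set B := ((d : ℝ) - g) * Real.exp (-2 * t * (E0 + δE)) with hB
  have hcpos : 0 < c := by positivity
  have hBpos : 0 < B := by positivity
  have hS0 : 0 ≤ S := Finset.sum_nonneg fun i _ => (Real.exp_pos _).le
  -- card F ≤ d - g
  have hFcard : (F.card : ℝ) ≤ (d:ℝ) - g := by
    have hsub : F ⊆ Gᶜ := fun i hi => Finset.mem_compl.mpr fun hiG =>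
      Finset.disjoint_left.mp hdisj hi hiG
    have h1 : F.card ≤ Gᶜ.card := Finset.card_le_card hsub
    have h2 : Gᶜ.card = d - g := by
      rw [Finset.card_compl, hGcard, Fintype.card_fin]
    have h3 : F.card ≤ d - g := h2 ▸ h1
    have : (F.card : ℝ) ≤ ((d - g : ℕ) : ℝ) := by exact_mod_cast h3
    rwa [Nat.cast_sub hgd.le] at this
  -- S ≤ B
  have hSB : S ≤ B := by
    have h1 : S ≤ (F.card : ℝ) * Real.exp (-2 * t * (E0 + δE)) := by
      rw [hS]
      calc ∑ i ∈ F, Real.exp (-2 * t * E i)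
          ≤ ∑ _i ∈ F, Real.exp (-2 * t * (E0 + δE)) := by
            apply Finset.sum_le_sum
            intro i hi
            simp only [hF, Finset.mem_filter] at hi
            apply Real.exp_le_exp.2
            nlinarith [hi.2]
        _ = (F.card : ℝ) * Real.exp (-2 * t * (E0 + δE)) := by
            rw [Finset.sum_const, nsmul_eq_mul]
    calc S ≤ (F.card : ℝ) * Real.exp (-2 * t * (E0 + δE)) := h1
      _ ≤ B := by
          rw [hB]
          exact mul_le_mul_of_nonneg_right hFcard (Real.exp_pos _).le
  -- N ≥ S + c
  have hNS : S + c ≤ N := by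
    have hGsum : ∑ i ∈ G, Real.exp (-2 * t * E i) = c := by
      rw [hc]
      have : ∀ i ∈ G, Real.exp (-2 * t * E i) = Real.exp (-2 * t * E0) := by
        intro i hi
        simp only [hG, Finset.mem_filter] at hi
        rw [(hdeg i).2 hi.2]
      rw [Finset.sum_congr rfl this, Finset.sum_const, nsmul_eq_mul, hGcard]
    have hunion : S + c = ∑ i ∈ F ∪ G, Real.exp (-2 * t * E i) := by
      rw [Finset.sum_union hdisj, hGsum]
    rw [hunion, hN]
    apply Finset.sum_le_sum_of_subset_of_nonneg (Finset.subset_univ _)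
    intro i _ _
    exact (Real.exp_pos _).le
  have hNpos : 0 < N := lt_of_lt_of_le (by linarith) hNS
  set D := 1 + (g : ℝ) * ((d : ℝ) - g)⁻¹ * Real.exp (2 * t * δE) with hD
  have hDpos : 0 < D := by
    have hgpos : (0:ℝ) < g := by exact_mod_cast hg
    have hX : 0 < (g : ℝ) * ((d : ℝ) - g)⁻¹ * Real.exp (2 * t * δE) :=
      mul_pos (mul_pos hgpos (inv_pos.2 hdg)) (Real.exp_pos _)
    rw [hD]; linarith
  -- key identity: B * D = B + c
  have hkey : B * D = B + c := by
    rw [hB, hD, hc, mul_add, mul_one]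
    have h2 : (-2 * t * (E0 + δE)) + (2 * t * δE) = -2 * t * E0 := by ring
    rw [show ((d:ℝ)-g) * Real.exp (-2*t*(E0+δE)) *
        ((g:ℝ) * ((d:ℝ)-g)⁻¹ * Real.exp (2*t*δE))
        = ((d:ℝ)-g) * ((d:ℝ)-g)⁻¹ *
          ((g:ℝ) * (Real.exp (-2*t*(E0+δE)) * Real.exp (2*t*δE))) from by ring,
      ← Real.exp_add, h2, mul_inv_cancel₀ hdg.ne', one_mul]
  rw [div_le_div_iff₀ hNpos hDpos]
  -- S * D ≤ 1 * N : since S * D ≤ S + c ≤ N, using S ≤ B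
  have h1 : S * D ≤ S + c := by
    have h2 : S * D * B ≤ (S + c) * B := by
      have : S * (B * D) ≤ (S + c) * B := by
        rw [hkey]
        nlinarith
      nlinarith [this]
    exact le_of_mul_le_mul_right h2 hBpos
  linarith
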